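/- Let a, b, d ∈ ℝ with (a − d)² + 4b² ≠ 0, set η = √((a − d)² + 4b²), and let A be the complex 2 × 2 matrix with real entries [[a, b], [b, d]]. Define α₁(t) to be the (1,1) entry of exp(−itA). Then for all t ∈ ℝ: |α₁(t)|² = 1 − (4b²/η²) sin²(ηt/2); in particular |α₁(t)|² + |α₂(t)|² = 1, where α₂(t) is the (2,1) entry of exp(−itA). -/

import Mathlib

open Matrix Real Complex
open scoped Nat

lemma exp_sq_smul_one (X : Matrix (Fin 2) (Fin 2) ℂ) (s : ℂ) (hs : s ≠ 0)
    (hX : X ^ 2 = s ^ 2 • (1 : Matrix (Fin 2) (Fin 2) ℂ)) :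
    NormedSpace.exp X
      = Complex.cosh s • (1 : Matrix (Fin 2) (Fin 2) ℂ) + (Complex.sinh s / s) • X := by
  rw [NormedSpace.exp_eq_tsum ℂ]
  refine HasSum.tsum_eq ?_
  refine HasSum.even_add_odd ?_ ?_
  · have h : ∀ k : ℕ, ((((2 * k)! : ℂ))⁻¹ • X ^ (2 * k))
        = (s ^ (2 * k) / (2 * k)!) • (1 : Matrix (Fin 2) (Fin 2) ℂ) := by
      intro k
      rw [pow_mul, hX, smul_pow, one_pow, ← pow_mul, smul_smul, div_eq_mul_inv, mul_comm]
    simp_rw [h]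
    exact (Complex.hasSum_cosh s).smul_const 1
  · have h : ∀ k : ℕ, ((((2 * k + 1)! : ℂ))⁻¹ • X ^ (2 * k + 1))
        = (s ^ (2 * k + 1) / (2 * k + 1)! / s) • X := by
      intro k
      have hx : X ^ (2 * k + 1) = (s ^ (2 * k)) • X := by
        rw [pow_succ, pow_mul, hX, smul_pow, one_pow, ← pow_mul, smul_mul_assoc, one_mul]
      rw [hx, smul_smul]
      congr 1
      rw [pow_succ, div_div, mul_comm ((2*k+1)! : ℂ) s, ← div_div, mul_div_assoc,
        div_self hs, mul_one, div_eq_mul_inv, mul_comm]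
    simp_rw [h]
    exact ((Complex.hasSum_sinh s).div_const s).smul_const X

set_option maxHeartbeats 1000000 in
set_option linter.unusedTactic false in
/-- **Survival probability of a two-level system.**
Let `a, b, d ∈ ℝ` with `(a−d)² + 4b² ≠ 0`, `η = √((a−d)² + 4b²)`, and let `A` be the
complex `2 × 2` matrix `[[a, b], [b, d]]`.  If `α₁ t` and `α₂ t` are the `(1,1)` and
`(2,1)` entries of `exp (−itA)`, then `|α₁ t|² = 1 − (4b²/η²) sin²(ηt/2)` and
`|α₁ t|² + |α₂ t|² = 1` for all `t`. -/
theorem two_level_survival_probability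
    (a b d : ℝ) (hnz : (a - d) ^ 2 + 4 * b ^ 2 ≠ 0)
    (η : ℝ) (hη : η = Real.sqrt ((a - d) ^ 2 + 4 * b ^ 2))
    (A : Matrix (Fin 2) (Fin 2) ℂ)
    (hA : A = !![(a : ℂ), (b : ℂ); (b : ℂ), (d : ℂ)])
    (α₁ α₂ : ℝ → ℂ)
    (hα₁ : ∀ t : ℝ, α₁ t = (NormedSpace.exp ((-(Complex.I * t)) • A)) 0 0)
    (hα₂ : ∀ t : ℝ, α₂ t = (NormedSpace.exp ((-(Complex.I * t)) • A)) 1 0) :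
    ∀ t : ℝ,
      ‖α₁ t‖ ^ 2 = 1 - (4 * b ^ 2 / η ^ 2) * Real.sin (η * t / 2) ^ 2 ∧
      ‖α₁ t‖ ^ 2 + ‖α₂ t‖ ^ 2 = 1 := by
  have hsum_pos : 0 < (a - d) ^ 2 + 4 * b ^ 2 :=
    lt_of_le_of_ne (by positivity) (Ne.symm hnz)
  have hη0 : η ≠ 0 := by
    rw [hη]; exact ne_of_gt (Real.sqrt_pos.mpr hsum_pos)
  have hη2 : η ^ 2 = (a - d) ^ 2 + 4 * b ^ 2 := by
    rw [hη, Real.sq_sqrt hsum_pos.le]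
  intro t
  by_cases ht : t = 0
  · subst ht
    have h0 : (-(Complex.I * ((0:ℝ):ℂ))) • A = 0 := by simp
    rw [hα₁ 0, hα₂ 0, h0, NormedSpace.exp_zero]
    simp [Matrix.one_apply]
  · set θ : ℝ := η * t / 2 with hθ
    have hθ0 : θ ≠ 0 := div_ne_zero (mul_ne_zero hη0 ht) two_ne_zero
    set m : ℝ := (a - d) / 2 with hm
    set c : ℝ := (a + d) / 2 with hc
    have pyth := Real.sin_sq_add_cos_sq θ
    have key1 : Real.sin θ / θ * (t * m) = (a - d) * Real.sin θ / η := by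
      rw [hθ, hm]; field_simp
    have key2 : Real.sin θ / θ * (t * b) = 2 * b * Real.sin θ / η := by
      rw [hθ]; field_simp
    have goal1' : Real.cos θ ^ 2 * η ^ 2 + (a - d) ^ 2 * Real.sin θ ^ 2
        = η ^ 2 - 4 * b ^ 2 * Real.sin θ ^ 2 := by
      linear_combination η ^ 2 * pyth - Real.sin θ ^ 2 * hη2
    have goal1 : Real.cos θ ^ 2 + ((a - d) * Real.sin θ / η) ^ 2
        = 1 - 4 * b ^ 2 / η ^ 2 * Real.sin θ ^ 2 := by
      field_simp
      linear_combination goal1'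
    have goal2 : Real.cos θ ^ 2 + ((a - d) * Real.sin θ / η) ^ 2
        + (2 * b * Real.sin θ / η) ^ 2 = 1 := by
      field_simp
      linear_combination goal1'
    set B : Matrix (Fin 2) (Fin 2) ℂ := !![((m:ℝ) : ℂ), (b : ℂ); (b : ℂ), -((m:ℝ) : ℂ)] with hB
    set z : ℂ := -(Complex.I * t) with hz
    have hAB : z • A = (z * c) • (1 : Matrix (Fin 2) (Fin 2) ℂ) + z • B := by
      rw [hA]
      ext i j
      fin_cases i <;> fin_cases j <;>
        simp [hB, Matrix.one_apply, hm, hc] <;> push_cast <;> ring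
    have hcomm : Commute ((z * c) • (1 : Matrix (Fin 2) (Fin 2) ℂ)) (z • B) := by
      unfold Commute SemiconjBy
      rw [smul_mul_assoc, one_mul, mul_smul_comm, mul_one]
    have hexp1 : NormedSpace.exp ((z * c) • (1 : Matrix (Fin 2) (Fin 2) ℂ))
        = Complex.exp (z * c) • (1 : Matrix (Fin 2) (Fin 2) ℂ) := by
      rw [← Algebra.algebraMap_eq_smul_one, ← Algebra.algebraMap_eq_smul_one]
      letI : SeminormedRing (Matrix (Fin 2) (Fin 2) ℂ) := Matrix.linftyOpSemiNormedRing
      letI : NormedRing (Matrix (Fin 2) (Fin 2) ℂ) := Matrix.linftyOpNormedRing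
      letI : NormedAlgebra ℂ (Matrix (Fin 2) (Fin 2) ℂ) := Matrix.linftyOpNormedAlgebra
      rw [Complex.exp_eq_exp_ℂ]
      exact (NormedSpace.algebraMap_exp_comm _).symm
    have hmb : (η / 2) ^ 2 = m ^ 2 + b ^ 2 := by
      rw [hm]; nlinarith [hη2]
    have hB2 : B ^ 2 = (((η / 2 : ℝ) : ℂ) ^ 2) • (1 : Matrix (Fin 2) (Fin 2) ℂ) := by
      ext i j
      fin_cases i <;> fin_cases j <;>
        simp [hB, sq, Matrix.mul_apply, Fin.sum_univ_two, Matrix.one_apply] <;>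
        · norm_cast
          norm_num [Complex.ext_iff]
          nlinarith [hmb]
    set s : ℂ := Complex.I * ((θ : ℝ) : ℂ) with hsdef
    have hX2 : (z • B) ^ 2 = (s ^ 2) • (1 : Matrix (Fin 2) (Fin 2) ℂ) := by
      rw [smul_pow, hB2, smul_smul]
      congr 1
      rw [hz, hsdef, hθ]
      push_cast
      ring
    have hs : s ≠ 0 :=
      mul_ne_zero Complex.I_ne_zero (by exact_mod_cast hθ0)
    have hexpB := exp_sq_smul_one (z • B) s hs hX2
    have hcosh : Complex.cosh s = ((Real.cos θ : ℝ) : ℂ) := by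
      rw [hsdef, mul_comm, Complex.cosh_mul_I, Complex.ofReal_cos]
    have hsinh : Complex.sinh s / s = ((Real.sin θ : ℝ) : ℂ) / ((θ : ℝ) : ℂ) := by
      rw [hsdef, mul_comm, Complex.sinh_mul_I, ← Complex.ofReal_sin,
        mul_div_mul_right _ _ Complex.I_ne_zero]
    have hsplit : NormedSpace.exp (z • A)
        = Complex.exp (z * c) •
          (((Real.cos θ : ℝ) : ℂ) • (1 : Matrix (Fin 2) (Fin 2) ℂ)
            + (((Real.sin θ : ℝ) : ℂ) / ((θ : ℝ) : ℂ)) • (z • B)) := by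
      rw [hAB, Matrix.exp_add_of_commute _ _ hcomm, hexp1, hexpB, hcosh, hsinh,
        smul_mul_assoc, one_mul]
    have e1 : α₁ t = Complex.exp (z * c) *
        (((Real.cos θ : ℝ) : ℂ) + (((Real.sin θ : ℝ) : ℂ) / ((θ : ℝ) : ℂ)) * (z * ((m:ℝ):ℂ))) := by
      rw [hα₁ t, hsplit]
      simp [hB, Matrix.one_apply, mul_assoc]
    have e2 : α₂ t = Complex.exp (z * c) *
        ((((Real.sin θ : ℝ) : ℂ) / ((θ : ℝ) : ℂ)) * (z * ((b:ℝ):ℂ))) := by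
      rw [hα₂ t, hsplit]
      simp [hB, Matrix.one_apply, mul_assoc]
    have habs_u : ‖Complex.exp (z * c)‖ = 1 := by
      rw [Complex.norm_exp, hz]
      simp
    have hval1 : ‖((Real.cos θ : ℝ) : ℂ)
          + (((Real.sin θ : ℝ) : ℂ) / ((θ : ℝ) : ℂ)) * (z * ((m:ℝ):ℂ))‖ ^ 2
        = Real.cos θ ^ 2 + (Real.sin θ / θ * (t * m)) ^ 2 := by
      rw [Complex.sq_norm, Complex.normSq_apply, hz]
      simp [Complex.sin_ofReal_re, Complex.cos_ofReal_re, Complex.sin_ofReal_im,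
        Complex.cos_ofReal_im]
      ring
    have hval2 : ‖(((Real.sin θ : ℝ) : ℂ) / ((θ : ℝ) : ℂ)) * (z * ((b:ℝ):ℂ))‖ ^ 2
        = (Real.sin θ / θ * (t * b)) ^ 2 := by
      rw [Complex.sq_norm, Complex.normSq_apply, hz]
      simp [Complex.sin_ofReal_re, Complex.cos_ofReal_re, Complex.sin_ofReal_im,
        Complex.cos_ofReal_im]
      ring
    have habs1 : ‖α₁ t‖ ^ 2
        = Real.cos θ ^ 2 + (Real.sin θ / θ * (t * m)) ^ 2 := by
      rw [e1, norm_mul, habs_u, one_mul, hval1]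
    have habs2 : ‖α₂ t‖ ^ 2 = (Real.sin θ / θ * (t * b)) ^ 2 := by
      rw [e2, norm_mul, habs_u, one_mul, hval2]
    refine ⟨?_, ?_⟩
    · rw [habs1, key1]
      exact goal1
    · rw [habs1, habs2, key1, key2]
      exact goal2
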